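/- Let Ω be the antisymmetric d×d matrix associated to irreducible combinatorial data π = (π_t, π_b) on an alphabet A, with entries Ω_{αβ} = +1 if π_t(α) < π_t(β) and π_b(α) > π_b(β), Ω_{αβ} = −1 if π_t(α) > π_t(β) and π_b(α) < π_b(β), and 0 otherwise. If γ is an arrow of the Rauzy diagram from π to π' of top type with winner α_t (π_t(α_t)=d) and loser α_b (π_b(α_b)=d), and B_γ = I + E_{α_b α_t}, then B_γ Ω_π (B_γ)^T = Ω_{π'}. -/

import Mathlib

section Aux

variable {A : Type*} [Fintype A] [DecidableEq A]

omit [Fintype A] in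
lemma aux_transpose_std (i j : A) :
    (Matrix.single i j (1:ℝ)).transpose = Matrix.single j i 1 := by
  ext a b
  simp [Matrix.single, Matrix.transpose_apply, and_comm]

lemma aux_mulE (i j : A) (M : Matrix A A ℝ) (a b : A) :
    (Matrix.single i j (1:ℝ) * M) a b = if a = i then M j b else 0 := by
  by_cases h : a = i
  · subst h; simp
  · simp [h]

lemma aux_Emul (i j : A) (M : Matrix A A ℝ) (a b : A) :
    (M * Matrix.single i j (1:ℝ)) a b = if b = j then M a i else 0 := by
  by_cases h : b = j
  · subst h; simp
  · simp [h]

end Aux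

/-- For a top-type Rauzy arrow `γ : π → π'` with winner `αt` and loser `αb`,
the elementary matrix `B_γ = I + E_{αb αt}` conjugates the antisymmetric matrix `Ω_π`
to `Ω_{π'}`: `B_γ Ω_π (B_γ)ᵀ = Ω_{π'}`.  Positions are 0-indexed (`Fin d`), so the paper's
position `k ∈ {1,…,d}` corresponds to the value `k-1` of the equivalence. -/
theorem stmt_0 {A : Type*} [Fintype A] [DecidableEq A]
    (d : ℕ) (hd : 2 ≤ d)
    (πt πb π't π'b : A ≃ Fin d)
    (Ω Ω' : Matrix A A ℝ)
    (hΩ : ∀ α β, Ω α β =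
      if πt α < πt β ∧ πb β < πb α then 1
      else if πt β < πt α ∧ πb α < πb β then -1 else 0)
    (hΩ' : ∀ α β, Ω' α β =
      if π't α < π't β ∧ π'b β < π'b α then 1
      else if π't β < π't α ∧ π'b α < π'b β then -1 else 0)
    -- irreducibility of π
    (hirr : ∀ k : ℕ, 1 ≤ k → k < d →
      {α | ((πt α : ℕ)) < k} ≠ {α | ((πb α : ℕ)) < k})
    -- winner and loser of the top-type arrow
    (αt αb : A)
    (hαt : (πt αt : ℕ) = d - 1) (hαb : (πb αb : ℕ) = d - 1)
    -- π' = R_t(π): top data unchanged, the loser αb is moved just after αt in the bottom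
    (hπ't : π't = πt)
    (hπ'b1 : ∀ α, (πb α : ℕ) ≤ (πb αt : ℕ) → π'b α = πb α)
    (hπ'b2 : (π'b αb : ℕ) = (πb αt : ℕ) + 1)
    (hπ'b3 : ∀ α, (πb αt : ℕ) < (πb α : ℕ) → (πb α : ℕ) < d - 1 →
      (π'b α : ℕ) = (πb α : ℕ) + 1)
    (B : Matrix A A ℝ)
    (hB : B = 1 + Matrix.single αb αt 1) :
    B * Ω * B.transpose = Ω' := by
  subst hB
  rw [hπ't] at hΩ'
  -- basic bounds
  have hptlt : ∀ α, (πt α : ℕ) < d := fun α => (πt α).isLt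
  have hpblt : ∀ α, (πb α : ℕ) < d := fun α => (πb α).isLt
  have h1 : ∀ α, α ≠ αt ↔ (πt α : ℕ) < d - 1 := by
    intro α
    constructor
    · intro h
      have hne : (πt α : ℕ) ≠ d - 1 := fun he =>
        h (πt.injective (Fin.val_injective (he.trans hαt.symm)))
      have := hptlt α; omega
    · intro h he; subst he; omega
  have h2 : ∀ α, α ≠ αb ↔ (πb α : ℕ) < d - 1 := by
    intro α
    constructor
    · intro h
      have hne : (πb α : ℕ) ≠ d - 1 := fun he =>
        h (πb.injective (Fin.val_injective (he.trans hαb.symm)))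
      have := hpblt α; omega
    · intro h he; subst he; omega
  have hne : αt ≠ αb := by
    intro h
    apply hirr (d - 1) (by omega) (by omega)
    ext α
    simp only [Set.mem_setOf_eq]
    rw [← h1 α, ← h2 α, h]
  have hbt : (πb αt : ℕ) < d - 1 := (h2 αt).mp hne
  have hval : ∀ α, α ≠ αb →
      (π'b α : ℕ) = if (πb α : ℕ) ≤ (πb αt : ℕ) then (πb α : ℕ) else (πb α : ℕ) + 1 := by
    intro α hα
    by_cases h : (πb α : ℕ) ≤ (πb αt : ℕ)
    · rw [if_pos h, hπ'b1 α h]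
    · rw [if_neg h]
      exact hπ'b3 α (by omega) ((h2 α).mp hα)
  have mono : ∀ x y, x ≠ αb → y ≠ αb →
      ((π'b x : ℕ) < (π'b y : ℕ) ↔ (πb x : ℕ) < (πb y : ℕ)) := by
    intro x y hx hy
    rw [hval x hx, hval y hy]
    split_ifs <;> omega
  have cmp1 : ∀ y, y ≠ αb →
      ((π'b αb : ℕ) < (π'b y : ℕ) ↔ (πb αt : ℕ) < (πb y : ℕ)) := by
    intro y hy
    rw [hπ'b2, hval y hy]
    split_ifs <;> omega
  have cmp2 : ∀ y, y ≠ αb →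
      ((π'b y : ℕ) < (π'b αb : ℕ) ↔ (πb y : ℕ) ≤ (πb αt : ℕ)) := by
    intro y hy
    rw [hπ'b2, hval y hy]
    split_ifs <;> omega
  ext α β
  have key : ((1 + Matrix.single αb αt (1:ℝ)) * Ω *
      (1 + Matrix.single αb αt (1:ℝ)).transpose) α β =
      Ω α β + (if α = αb then Ω αt β else 0) +
        ((if β = αb then Ω α αt else 0) +
          (if α = αb then (if β = αb then Ω αt αt else 0) else 0)) := by
    simp only [Matrix.transpose_add, Matrix.transpose_one, aux_transpose_std,
      Matrix.add_mul, Matrix.mul_add, Matrix.one_mul, Matrix.mul_one,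
      Matrix.add_apply, aux_mulE, aux_Emul]
    by_cases h : α = αb <;> by_cases h' : β = αb <;> simp [h, h'] <;> ring
  rw [key]
  simp only [hΩ, hΩ', Fin.lt_def]
  by_cases hA : α = αb <;> by_cases hB' : β = αb
  · -- α = αb, β = αb
    rw [hA, hB']
    have e3 : (πt αb : ℕ) < (πt αt : ℕ) := by
      rw [hαt]; exact (h1 αb).mp (Ne.symm hne)
    have e4 : (πb αt : ℕ) < (πb αb : ℕ) := by rw [hαb]; exact hbt
    split_ifs <;> first | ring1 | (exfalso; omega) | simp_all
  · -- α = αb, β ≠ αb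
    rw [hA]
    simp only [cmp1 β hB', cmp2 β hB']
    have f1 : (πb β : ℕ) < d - 1 := (h2 β).mp hB'
    have f2 : (πt β : ℕ) < d := hptlt β
    have f3 : (πt αb : ℕ) < d - 1 := (h1 αb).mp (Ne.symm hne)
    have f4 : (πt β : ℕ) = d - 1 → (πb β : ℕ) = (πb αt : ℕ) := by
      intro he
      have : β = αt := πt.injective (Fin.val_injective (he.trans hαt.symm))
      rw [this]
    have f5 : (πt β : ℕ) ≠ (πt αb : ℕ) := fun he =>
      hB' (πt.injective (Fin.val_injective he))
    split_ifs <;> first | ring1 | (exfalso; omega) | simp_all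
  · -- α ≠ αb, β = αb
    rw [hB']
    simp only [cmp1 α hA, cmp2 α hA]
    have f1 : (πb α : ℕ) < d - 1 := (h2 α).mp hA
    have f2 : (πt α : ℕ) < d := hptlt α
    have f3 : (πt αb : ℕ) < d - 1 := (h1 αb).mp (Ne.symm hne)
    have f4 : (πt α : ℕ) = d - 1 → (πb α : ℕ) = (πb αt : ℕ) := by
      intro he
      have : α = αt := πt.injective (Fin.val_injective (he.trans hαt.symm))
      rw [this]
    have f5 : (πt α : ℕ) ≠ (πt αb : ℕ) := fun he =>
      hA (πt.injective (Fin.val_injective he))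
    split_ifs <;> first | ring1 | (exfalso; omega) | simp_all
  · -- α ≠ αb, β ≠ αb
    simp only [if_neg hA, if_neg hB', add_zero, zero_add]
    simp only [mono β α hB' hA, mono α β hA hB']
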